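/- Let S ⊂ ℝⁿ be compact with 0 ∈ S, partitioned into finitely many compact convex polytopes {X_i}_{i∈I} with pairwise disjoint interiors. Let f : S → ℝⁿ be continuous and piecewise affine with f(x) = A_i x + a_i on X_i and f(0) = 0, locally Lipschitz, and suppose S is forward invariant for ẋ = f(x). Let V : S → ℝ be continuous and piecewise affine, V(x) = p_i·x + q_i on X_i with q_i = 0 for every cell containing the origin, and suppose there exists ε₁ > 0 such that p_i·(A_i v + a_i) ≤ −ε₁ for every i ∈ I and every vertex v ≠ 0 of X_i. Then every solution x(·) of ẋ = f(x) with x(0) ∈ S satisfies x(t) → 0 as t → ∞; that is, S is contained in the region of attraction of the equilibrium 0. -/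

import Mathlib

open Filter Set Matrix

/-- A curve `x` is a solution of `ẋ = f(x)` on the time interval `[0, T)` (with `T ∈ (0, ∞]`
encoded as an extended real number). -/
def IsSolOn {E : Type*} [NormedAddCommGroup E] [NormedSpace ℝ E]
    (f : E → E) (x : ℝ → E) (T : EReal) : Prop :=
  ∀ t : ℝ, 0 ≤ t → (t : EReal) < T → HasDerivWithinAt x (f (x t)) (Set.Ici 0) t

/-- A set `S` is forward invariant for `ẋ = f(x)` if every solution on `[0, T)` with
`x 0 ∈ S` stays in `S`. -/
def FwdInv {E : Type*} [NormedAddCommGroup E] [NormedSpace ℝ E]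
    (f : E → E) (S : Set E) : Prop :=
  ∀ (T : EReal) (x : ℝ → E), 0 < T → IsSolOn f x T → x 0 ∈ S →
    ∀ t : ℝ, 0 ≤ t → (t : EReal) < T → x t ∈ S

private lemma dotProduct_finset_sum' {n : ℕ} {α : Type*} (p : Fin n → ℝ) (G : Finset α)
    (g : α → Fin n → ℝ) : p ⬝ᵥ (∑ v ∈ G, g v) = ∑ v ∈ G, p ⬝ᵥ g v := by
  classical
  induction G using Finset.cons_induction with
  | empty => simp
  | cons v G hv ih => rw [Finset.sum_cons, Finset.sum_cons, dotProduct_add, ih]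

/-- Correctness of SEROAISE: `S` is a compact forward invariant set containing `0`,
partitioned into finitely many compact convex polytopes; `f` is continuous, piecewise affine,
locally Lipschitz on `S` with `f(0) = 0`; `V` is continuous and piecewise affine with zero
offset on cells containing the origin; and the derivative `p_i·(A_i v + a_i)` of `V` along the
dynamics is `≤ -ε₁ < 0` at every nonzero vertex of every cell. Then every solution starting
in `S` converges to `0`, i.e. `S` is contained in the region of attraction of `0`. -/
theorem stmt11 {n : ℕ} {ι : Type*} [Fintype ι]
    (S : Set (Fin n → ℝ)) (hScomp : IsCompact S) (h0S : (0 : Fin n → ℝ) ∈ S)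
    (X : ι → Set (Fin n → ℝ))
    (hXpoly : ∀ i, ∃ W : Finset (Fin n → ℝ), X i = convexHull ℝ (W : Set (Fin n → ℝ)))
    (hcover : (⋃ i, X i) = S)
    (hdisj : ∀ i j, i ≠ j → interior (X i) ∩ interior (X j) = ∅)
    (f : (Fin n → ℝ) → (Fin n → ℝ)) (hf : ContinuousOn f S)
    (A : ι → Matrix (Fin n) (Fin n) ℝ) (a : ι → Fin n → ℝ)
    (hfX : ∀ i, ∀ x ∈ X i, f x = A i *ᵥ x + a i)
    (hf0 : f 0 = 0)
    (hlip : ∀ x ∈ S, ∃ (K : NNReal) (U : Set (Fin n → ℝ)),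
      U ∈ nhdsWithin x S ∧ LipschitzOnWith K f U)
    (hSinv : FwdInv f S)
    (V : (Fin n → ℝ) → ℝ) (hV : ContinuousOn V S)
    (p : ι → Fin n → ℝ) (q : ι → ℝ)
    (hVX : ∀ i, ∀ x ∈ X i, V x = p i ⬝ᵥ x + q i)
    (hq0 : ∀ i, (0 : Fin n → ℝ) ∈ X i → q i = 0)
    (ε₁ : ℝ) (hε₁ : 0 < ε₁)
    (hdec : ∀ i, ∀ v ∈ (X i).extremePoints ℝ, v ≠ 0 →
      p i ⬝ᵥ (A i *ᵥ v + a i) ≤ -ε₁) :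
    ∀ x : ℝ → (Fin n → ℝ), IsSolOn f x (⊤ : EReal) → x 0 ∈ S →
      Tendsto x atTop (nhds 0) := by
  intro x hsol hx0
  have htop : ∀ t : ℝ, (t : EReal) < ⊤ := fun t => EReal.coe_lt_top t
  have hxS : ∀ t : ℝ, 0 ≤ t → x t ∈ S := fun t ht =>
    hSinv ⊤ x (by norm_num) hsol hx0 t ht (htop t)
  have hxc : ∀ t : ℝ, 0 ≤ t → ContinuousWithinAt x (Ici 0) t := fun t ht =>
    (hsol t ht (htop t)).continuousWithinAt
  have hXclosed : ∀ i, IsClosed (X i) := by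
    intro i
    obtain ⟨W, hW⟩ := hXpoly i
    rw [hW]
    exact (W.finite_toSet.isCompact_convexHull ℝ).isClosed
  have hXsub : ∀ i, X i ⊆ S := fun i => hcover ▸ subset_iUnion X i
  -- radius bound for S
  obtain ⟨R₀, hR₀⟩ := hScomp.isBounded.exists_norm_le
  set R : ℝ := max R₀ 1 with hRdef
  have hR1 : (0 : ℝ) < R := lt_of_lt_of_le one_pos (le_max_right _ _)
  have hRS : ∀ y ∈ S, ‖y‖ ≤ R := fun y hy => (hR₀ y hy).trans (le_max_left _ _)
  have contDot : ∀ v : Fin n → ℝ, Continuous fun w : Fin n → ℝ => v ⬝ᵥ w := by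
    intro v
    simp only [dotProduct]
    exact continuous_finset_sum _ (fun i _ => continuous_const.mul (continuous_apply i))
  -- pointwise decrease bound
  have hbound : ∀ j, ∀ y ∈ X j, p j ⬝ᵥ f y ≤ -(ε₁ / R) * ‖y‖ := by
    intro j y hy
    obtain ⟨W, hW⟩ := hXpoly j
    have hEsub : (X j).extremePoints ℝ ⊆ (W : Set (Fin n → ℝ)) := by
      rw [hW]; exact extremePoints_convexHull_subset
    have hEfin : ((X j).extremePoints ℝ).Finite := W.finite_toSet.subset hEsub
    have hXeq : X j = convexHull ℝ ((X j).extremePoints ℝ) := by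
      have h1 : IsCompact (X j) := by rw [hW]; exact W.finite_toSet.isCompact_convexHull ℝ
      have h2 : Convex ℝ (X j) := by rw [hW]; exact convex_convexHull ℝ _
      have h3 := closure_convexHull_extremePoints h1 h2
      have h4 : IsClosed (convexHull ℝ ((X j).extremePoints ℝ)) :=
        (hEfin.isCompact_convexHull ℝ).isClosed
      calc X j = closure (convexHull ℝ ((X j).extremePoints ℝ)) := h3.symm
      _ = convexHull ℝ ((X j).extremePoints ℝ) := h4.closure_eq
    have hyF : y ∈ convexHull ℝ (hEfin.toFinset : Set (Fin n → ℝ)) := by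
      rw [hEfin.coe_toFinset, ← hXeq]; exact hy
    rw [Finset.convexHull_eq] at hyF
    obtain ⟨w, hw0, hw1, hwy⟩ := hyF
    rw [Finset.centerMass_eq_of_sum_1 _ _ hw1] at hwy
    simp only [id] at hwy
    set F := hEfin.toFinset with hFdef
    have hFX : ∀ v ∈ F, v ∈ (X j).extremePoints ℝ := fun v hv => hEfin.mem_toFinset.mp hv
    -- a j = 0 when 0 is a vertex
    have ha0 : (0 : Fin n → ℝ) ∈ X j → a j = 0 := by
      intro h0X
      have := hfX j 0 h0X
      rw [hf0, Matrix.mulVec_zero, zero_add] at this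
      exact this.symm
    -- linear expansion
    have hLsum : p j ⬝ᵥ (A j *ᵥ y + a j)
        = ∑ v ∈ F, w v * (p j ⬝ᵥ (A j *ᵥ v + a j)) := by
      have hmv : A j *ᵥ y = ∑ v ∈ F, w v • (A j *ᵥ v) := by
        rw [← hwy, ← Matrix.mulVecLin_apply, map_sum]
        refine Finset.sum_congr rfl (fun v _ => ?_)
        rw [LinearMap.map_smul, Matrix.mulVecLin_apply]
      rw [hmv]
      have hd1 : p j ⬝ᵥ ((∑ v ∈ F, w v • (A j *ᵥ v)) + a j)
          = (∑ v ∈ F, w v * (p j ⬝ᵥ (A j *ᵥ v))) + p j ⬝ᵥ a j := by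
        rw [dotProduct_add]
        congr 1
        rw [dotProduct_finset_sum']
        refine Finset.sum_congr rfl (fun v _ => ?_)
        rw [dotProduct_smul, smul_eq_mul]
      rw [hd1]
      have : ∑ v ∈ F, w v * (p j ⬝ᵥ (A j *ᵥ v + a j))
          = (∑ v ∈ F, w v * (p j ⬝ᵥ (A j *ᵥ v))) + (∑ v ∈ F, w v) * (p j ⬝ᵥ a j) := by
        rw [Finset.sum_mul, ← Finset.sum_add_distrib]
        refine Finset.sum_congr rfl (fun v _ => ?_)
        rw [dotProduct_add]; ring
      rw [this, hw1, one_mul]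
    set σ : ℝ := ∑ v ∈ F, (if v = 0 then 0 else w v) with hσdef
    have h1 : p j ⬝ᵥ (A j *ᵥ y + a j) ≤ -ε₁ * σ := by
      rw [hLsum, hσdef, Finset.mul_sum]
      refine Finset.sum_le_sum (fun v hv => ?_)
      by_cases hv0 : v = 0
      · subst hv0
        have h0X : (0 : Fin n → ℝ) ∈ X j := extremePoints_subset (hFX _ hv)
        rw [ha0 h0X]
        simp
      · rw [if_neg hv0, mul_comm (-ε₁) (w v)]
        have := hdec j v (hFX v hv) hv0
        have hwnn := hw0 v hv
        nlinarith
    have h2 : ‖y‖ ≤ R * σ := by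
      have hn : ‖y‖ ≤ ∑ v ∈ F, (if v = (0 : Fin n → ℝ) then 0 else R * w v) := by
        calc ‖y‖ = ‖∑ v ∈ F, w v • v‖ := by rw [hwy]
        _ ≤ ∑ v ∈ F, ‖w v • v‖ := norm_sum_le _ _
        _ ≤ ∑ v ∈ F, (if v = (0 : Fin n → ℝ) then 0 else R * w v) := by
            refine Finset.sum_le_sum (fun v hv => ?_)
            by_cases hv0 : v = 0
            · subst hv0; simp
            · rw [if_neg hv0, norm_smul, Real.norm_eq_abs, abs_of_nonneg (hw0 v hv)]
              have hvS : v ∈ S := hXsub j (extremePoints_subset (hFX v hv))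
              have := hRS v hvS
              have hwnn := hw0 v hv
              nlinarith
      calc ‖y‖ ≤ ∑ v ∈ F, (if v = (0 : Fin n → ℝ) then 0 else R * w v) := hn
      _ = R * σ := by
          rw [hσdef, Finset.mul_sum]
          refine Finset.sum_congr rfl (fun v _ => ?_)
          by_cases hv0 : v = 0 <;> simp [hv0]
    have h3 : ‖y‖ / R ≤ σ := by
      rw [div_le_iff₀ hR1]
      linarith [h2]
    have h4 : -ε₁ * σ ≤ -(ε₁ / R) * ‖y‖ := by
      have : ε₁ / R * ‖y‖ ≤ ε₁ * σ := by
        have := mul_le_mul_of_nonneg_left h3 hε₁.le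
        calc ε₁ / R * ‖y‖ = ε₁ * (‖y‖ / R) := by ring
        _ ≤ ε₁ * σ := this
      linarith
    calc p j ⬝ᵥ f y = p j ⬝ᵥ (A j *ᵥ y + a j) := by rw [hfX j y hy]
    _ ≤ -ε₁ * σ := h1
    _ ≤ -(ε₁ / R) * ‖y‖ := h4
  -- key slope estimate
  have key : ∀ t : ℝ, 0 ≤ t → ∀ r : ℝ, -(ε₁ / R) * ‖x t‖ < r →
      ∃ᶠ z in nhdsWithin t (Ioi t), slope (fun s => V (x s)) t z < r := by
    intro t ht r hr
    have hIoi : Ioi t ⊆ Ici (0 : ℝ) := fun z hz => ht.trans (le_of_lt hz)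
    have hmem : ∀ᶠ z in nhdsWithin t (Ioi t), ∀ j, x z ∈ X j → x t ∈ X j := by
      set C := ⋃ j ∈ {j : ι | x t ∉ X j}, X j with hC
      have hCcl : IsClosed C :=
        (Set.toFinite _).isClosed_biUnion (fun j _ => hXclosed j)
      have hxtC : x t ∈ Cᶜ := by
        simp only [mem_compl_iff]
        intro hmem'
        rw [hC, mem_iUnion₂] at hmem'
        obtain ⟨j, hj, hxj⟩ := hmem'
        exact hj hxj
      have h1 : ∀ᶠ z in nhdsWithin t (Ici 0), x z ∈ Cᶜ :=
        (hxc t ht).eventually_mem (hCcl.isOpen_compl.mem_nhds hxtC)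
      refine (h1.filter_mono (nhdsWithin_mono t hIoi)).mono ?_
      intro z hz j hzj
      by_contra hjt
      exact hz (mem_biUnion (show j ∈ {j : ι | x t ∉ X j} from hjt) hzj)
    have hslope : ∀ᶠ z in nhdsWithin t (Ioi t),
        ∀ j, x t ∈ X j → p j ⬝ᵥ slope x t z < r := by
      rw [eventually_all]
      intro j
      by_cases hj : x t ∈ X j
      · have h1 : Tendsto (slope x t) (nhdsWithin t (Ioi t)) (nhds (f (x t))) := by
          have := hasDerivWithinAt_iff_tendsto_slope.mp (hsol t ht (htop t))
          refine this.mono_left (nhdsWithin_mono t (fun z hz => ⟨hIoi hz, ?_⟩))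
          simp only [mem_singleton_iff]
          exact hz.ne'
        have h2 : Tendsto (fun z => p j ⬝ᵥ slope x t z) (nhdsWithin t (Ioi t))
            (nhds (p j ⬝ᵥ f (x t))) := ((contDot (p j)).tendsto _).comp h1
        have h3 : p j ⬝ᵥ f (x t) < r := lt_of_le_of_lt (hbound j (x t) hj) hr
        exact (h2.eventually_lt_const h3).mono (fun z hz _ => hz)
      · exact Eventually.of_forall (fun z => fun hj' => (hj hj').elim)
    have hin : ∀ᶠ z in nhdsWithin t (Ioi t), z ∈ Ioi t := eventually_mem_nhdsWithin
    refine ((hmem.and hslope).and hin).frequently.mono ?_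
    rintro z ⟨⟨hz1, hz2⟩, hz3⟩
    have hz0 : (0 : ℝ) ≤ z := hIoi hz3
    have hxz : x z ∈ S := hxS z hz0
    have : x z ∈ ⋃ i, X i := by rw [hcover]; exact hxz
    obtain ⟨j, hj⟩ := mem_iUnion.mp this
    have hjt : x t ∈ X j := hz1 j hj
    have hVz := hVX j _ hj
    have hVt := hVX j _ hjt
    have heq : slope (fun s => V (x s)) t z = p j ⬝ᵥ slope x t z := by
      have hzt : z - t ≠ 0 := sub_ne_zero.mpr hz3.ne'
      show (z - t)⁻¹ • (V (x z) - V (x t)) = p j ⬝ᵥ ((z - t)⁻¹ • (x z - x t))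
      rw [hVz, hVt, dotProduct_smul, smul_eq_mul, smul_eq_mul, dotProduct_sub]
      ring
    rw [heq]
    exact hz2 j hjt
  -- continuity of V ∘ x on compact intervals
  have hgc : ∀ a b : ℝ, 0 ≤ a → ContinuousOn (fun s => V (x s)) (Icc a b) := by
    intro a b ha t htab
    have ht0 : (0 : ℝ) ≤ t := ha.trans htab.1
    exact ((hV (x t) (hxS t ht0)).comp ((hxc t ht0).mono (fun z hz => ha.trans hz.1))
      (fun z hz => hxS z (ha.trans hz.1)))
  -- decay estimate
  have decay : ∀ a b c : ℝ, 0 ≤ a → a ≤ b →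
      (∀ t ∈ Icc a b, c ≤ ε₁ / R * ‖x t‖) →
      V (x b) ≤ V (x a) - c * (b - a) := by
    intro a b c ha hab hnorm
    have hB' : ∀ s ∈ Ico a b, HasDerivWithinAt (fun s => V (x a) - c * (s - a)) (-c) (Ici s) s := by
      intro s _
      have h1 : HasDerivAt (fun s : ℝ => V (x a) - c * (s - a)) (0 - c * 1) s :=
        (hasDerivAt_const s _).sub (((hasDerivAt_id s).sub_const a).const_mul c)
      simpa using h1.hasDerivWithinAt
    have := image_le_of_liminf_slope_right_le_deriv_boundary (f := fun s => V (x s))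
      (B := fun s => V (x a) - c * (s - a)) (B' := fun _ => -c) (a := a) (b := b)
      (hgc a b ha) (by simp) (by fun_prop) hB'
      (fun s hs r hrc => key s (ha.trans hs.1) r
        (lt_of_le_of_lt (by have := hnorm s ⟨hs.1, hs.2.le⟩; linarith) hrc))
      (right_mem_Icc.mpr hab)
    simpa using this
  have mono : ∀ a b : ℝ, 0 ≤ a → a ≤ b → V (x b) ≤ V (x a) := by
    intro a b ha hab
    have := decay a b 0 ha hab
      (fun t _ => mul_nonneg (div_nonneg hε₁.le hR1.le) (norm_nonneg _))
    simpa using this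
  -- lower bound on V on S
  obtain ⟨ym, hymS, hym⟩ := hScomp.exists_isMinOn ⟨0, h0S⟩ hV
  set m : ℝ := V ym with hmdef
  have hmle : ∀ t : ℝ, 0 ≤ t → m ≤ V (x t) := fun t ht => hym (hxS t ht)
  -- speed bound
  obtain ⟨M₀, hM₀⟩ := hScomp.exists_bound_of_continuousOn hf
  set M : ℝ := max M₀ 1 with hMdef
  have hM1 : (0 : ℝ) < M := lt_of_lt_of_le one_pos (le_max_right _ _)
  have speed : ∀ a b : ℝ, 0 ≤ a → a ≤ b → ‖x b - x a‖ ≤ M * (b - a) := by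
    intro a b ha hab
    have h := (convex_Icc a b).norm_image_sub_le_of_norm_hasDerivWithin_le
      (f := x) (f' := fun t => f (x t)) (C := M)
      (fun t htab => (hsol t (ha.trans htab.1) (htop t)).mono (fun z hz => ha.trans hz.1))
      (fun t htab => le_trans (hM₀ _ (hxS t (ha.trans htab.1))) (le_max_left _ _))
      (left_mem_Icc.mpr hab) (right_mem_Icc.mpr hab)
    rwa [Real.norm_eq_abs, abs_of_nonneg (sub_nonneg.2 hab)] at h
  -- claim 1 : trajectory enters every ball around 0 at arbitrarily large times
  have claim1 : ∀ δ : ℝ, 0 < δ → ∀ s : ℝ, 0 ≤ s → ∃ u, s ≤ u ∧ ‖x u‖ < δ := by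
    intro δ hδ s hs
    by_contra h
    push_neg at h
    set c : ℝ := ε₁ / R * δ with hcdef
    have hcpos : 0 < c := mul_pos (div_pos hε₁ hR1) hδ
    set b : ℝ := s + (V (x s) - m) / c + 1 with hbdef
    have hVm : m ≤ V (x s) := hmle s hs
    have hsb : s ≤ b := by
      have h0 : 0 ≤ (V (x s) - m) / c := div_nonneg (by linarith) hcpos.le
      rw [hbdef]
      linarith
    have h1 := decay s b c hs hsb (fun t htab => by
      have hδt : δ ≤ ‖x t‖ := h t htab.1
      calc c = ε₁ / R * δ := rfl
      _ ≤ ε₁ / R * ‖x t‖ := mul_le_mul_of_nonneg_left hδt (div_nonneg hε₁.le hR1.le))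
    have h2 : m ≤ V (x b) := hmle b (hs.trans hsb)
    have h3 : c * (b - s) = (V (x s) - m) + c := by
      have hb : b - s = (V (x s) - m) / c + 1 := by rw [hbdef]; ring
      rw [hb, mul_add, mul_one, mul_div_cancel₀ _ hcpos.ne']
    linarith
  -- final argument
  rw [Metric.tendsto_atTop]
  intro ε hε
  by_contra hcon
  push_neg at hcon
  set δ : ℝ := ε / 3 with hδdef
  have hδ : 0 < δ := by positivity
  set c : ℝ := ε₁ / R * δ with hcdef
  have hcpos : 0 < c := mul_pos (div_pos hε₁ hR1) hδ
  set d : ℝ := c * (δ / M) with hddef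
  have hdpos : 0 < d := mul_pos hcpos (div_pos hδ hM1)
  have step : ∀ s : ℝ, 0 ≤ s → ∃ u, 0 ≤ u ∧ V (x u) ≤ V (x s) - d := by
    intro s hs
    obtain ⟨s₁, hs₁s, hs₁δ⟩ := claim1 δ hδ s hs
    have hs₁ : 0 ≤ s₁ := hs.trans hs₁s
    obtain ⟨u, hu, huε⟩ := hcon s₁
    rw [dist_zero_right] at huε
    have hu0 : 0 ≤ u := hs₁.trans hu
    set K : Set ℝ := Icc s₁ u ∩ (fun t => ‖x t‖) ⁻¹' Iic δ with hKdef
    have hKne : s₁ ∈ K := ⟨⟨le_rfl, hu⟩, hs₁δ.le⟩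
    have hKbdd : BddAbove K := ⟨u, fun t ht => ht.1.2⟩
    have hxcont : ContinuousOn x (Icc s₁ u) :=
      fun t ht => (hxc t (hs₁.trans ht.1)).mono (fun z hz => hs₁.trans hz.1)
    have hKclosed : IsClosed K :=
      hxcont.norm.preimage_isClosed_of_isClosed isClosed_Icc isClosed_Iic
    set s' : ℝ := sSup K with hs'def
    have hs'K : s' ∈ K := hKclosed.csSup_mem ⟨s₁, hKne⟩ hKbdd
    obtain ⟨⟨hs₁s', hs'u⟩, hs'δ⟩ := hs'K
    have hs'0 : 0 ≤ s' := hs₁.trans hs₁s'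
    have hgt : ∀ t, s' < t → t ≤ u → δ < ‖x t‖ := by
      intro t hts htu
      by_contra hle
      push_neg at hle
      have htK : t ∈ K := ⟨⟨hs₁s'.trans hts.le, htu⟩, hle⟩
      exact absurd (le_csSup hKbdd htK) (not_le.2 hts)
    have hδε : δ < ε := by rw [hδdef]; linarith
    have hs'lt : s' < u := by
      rcases lt_or_eq_of_le hs'u with h | h
      · exact h
      · exfalso
        rw [h] at hs'δ
        simp only [mem_preimage, mem_Iic] at hs'δ
        linarith
    have hs'ge : δ ≤ ‖x s'‖ := by
      by_contra hlt
      push_neg at hlt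
      have h1 : ∀ᶠ z in nhdsWithin s' (Ioi s'), ‖x z‖ < δ := by
        have hcn : Tendsto (fun z => ‖x z‖) (nhdsWithin s' (Ici 0)) (nhds ‖x s'‖) :=
          (hxc s' hs'0).norm
        exact (hcn.eventually_lt_const hlt).filter_mono
          (nhdsWithin_mono s' (fun z hz => hs'0.trans (le_of_lt hz)))
      have h2 : ∀ᶠ z in nhdsWithin s' (Ioi s'), z ∈ Ioc s' u :=
        Ioc_mem_nhdsGT hs'lt
      obtain ⟨z, hz1, hz2⟩ := (h1.and h2).exists
      exact absurd hz1 (not_lt.2 (hgt z hz2.1 hz2.2).le)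
    have hnormIcc : ∀ t ∈ Icc s' u, c ≤ ε₁ / R * ‖x t‖ := by
      intro t ht
      have hδt : δ ≤ ‖x t‖ := by
        rcases eq_or_lt_of_le ht.1 with h | h
        · rw [← h]; exact hs'ge
        · exact (hgt t h ht.2).le
      calc c = ε₁ / R * δ := rfl
      _ ≤ ε₁ / R * ‖x t‖ := mul_le_mul_of_nonneg_left hδt (div_nonneg hε₁.le hR1.le)
    have hdec2 := decay s' u c hs'0 hs'lt.le hnormIcc
    have htrans : δ / M ≤ u - s' := by
      have h1 : ‖x u - x s'‖ ≤ M * (u - s') := speed s' u hs'0 hs'lt.le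
      have h2 : ‖x u‖ - ‖x s'‖ ≤ ‖x u - x s'‖ := norm_sub_norm_le _ _
      have hxs'R : ‖x s'‖ ≤ δ := hs'δ
      have h3 : δ ≤ M * (u - s') := by
        have : δ ≤ ε - δ := by rw [hδdef]; linarith
        linarith
      rw [div_le_iff₀ hM1]
      linarith [h3]
    refine ⟨u, hu0, ?_⟩
    have hmono : V (x s') ≤ V (x s) := mono s s' hs (hs₁s.trans hs₁s')
    have hcd : d ≤ c * (u - s') := by
      rw [hddef]
      exact mul_le_mul_of_nonneg_left htrans hcpos.le
    linarith
  have iter : ∀ k : ℕ, ∃ u, 0 ≤ u ∧ V (x u) ≤ V (x 0) - k * d := by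
    intro k
    induction k with
    | zero => exact ⟨0, le_rfl, by simp⟩
    | succ k ih =>
      obtain ⟨u, hu0, hu⟩ := ih
      obtain ⟨u', hu'0, hu'⟩ := step u hu0
      refine ⟨u', hu'0, ?_⟩
      push_cast
      linarith [hu', hu]
  obtain ⟨k, hk⟩ := exists_nat_gt ((V (x 0) - m) / d)
  obtain ⟨u, hu0, hu⟩ := iter k
  have h1 : m ≤ V (x u) := hmle u hu0
  rw [div_lt_iff₀ hdpos] at hk
  linarith
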